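/- The stretched vertical derivative D⁰, defined by (D⁰ f)(t,φ,η) = h̃(t)^{−1} ∂f/∂η (t,φ,η), acts sparsely on the cylinder gyroscopic bases: for all l, l′, k, k′ ∈ ℕ, ⟨D⁰ Φ_{m,l,k}^{(α,σ)}, Φ_{m,l′,k′}^{(α+1,σ)}⟩_{dμ(α+1)} = 0 unless l′ = l−1 and k−1 ≤ k′ ≤ k. -/

import Mathlib

open MeasureTheory Polynomial

lemma expand_in_basis (R : ℕ → Polynomial ℝ) (hdeg : ∀ n, (R n).degree = n) :
    ∀ (d : ℕ) (p : Polynomial ℝ), p.degree ≤ (d : ℕ) →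
      ∃ c : ℕ → ℝ, p = ∑ j ∈ Finset.range (d + 1), Polynomial.C (c j) * R j := by
  intro d
  induction d with
  | zero =>
      intro p hp
      set r := (R 0).coeff 0 with hrdef
      have hR0 : R 0 = Polynomial.C r :=
        Polynomial.eq_C_of_degree_le_zero (le_of_eq (hdeg 0))
      have hRne : R 0 ≠ 0 := by
        intro hc
        have h0 := hdeg 0
        rw [hc, Polynomial.degree_zero] at h0
        simp at h0
      have hr : r ≠ 0 := by
        intro hc
        exact hRne (by rw [hR0, hc, map_zero])
      refine ⟨fun _ => p.coeff 0 / r, ?_⟩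
      rw [Finset.sum_range_one]
      have key : Polynomial.C (p.coeff 0 / r) * R 0 = Polynomial.C (p.coeff 0) := by
        rw [hR0, ← Polynomial.C_mul, div_mul_cancel₀ _ hr]
      rw [key]
      exact Polynomial.eq_C_of_degree_le_zero hp
  | succ d ih =>
      intro p hp
      have hRne : R (d+1) ≠ 0 := by
        intro hc
        have h0 := hdeg (d+1)
        rw [hc, Polynomial.degree_zero] at h0
        exact absurd h0.symm (by exact_mod_cast WithBot.coe_ne_bot)
      have hnd : (R (d+1)).natDegree = d+1 :=
        Polynomial.natDegree_eq_of_degree_eq_some (hdeg (d+1))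
      have hr : (R (d+1)).coeff (d+1) ≠ 0 := by
        have := Polynomial.leadingCoeff_ne_zero.mpr hRne
        rwa [Polynomial.leadingCoeff, hnd] at this
      set a := p.coeff (d+1) / (R (d+1)).coeff (d+1) with ha
      set q := p - Polynomial.C a * R (d+1) with hq
      have hqdeg : q.degree ≤ (d : ℕ) := by
        rw [Polynomial.degree_le_iff_coeff_zero]
        intro mm hmm
        have hm1 : d < mm := by exact_mod_cast hmm
        have hcq : q.coeff mm = p.coeff mm - a * (R (d+1)).coeff mm := by
          simp [hq, Polynomial.coeff_C_mul]
        rcases eq_or_lt_of_le (Nat.succ_le_of_lt hm1) with he | hlt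
        · rw [hcq, ← he, ha, div_mul_cancel₀ _ hr, sub_self]
        · have h1 : p.coeff mm = 0 := Polynomial.coeff_eq_zero_of_degree_lt
            (lt_of_le_of_lt hp (by exact_mod_cast hlt))
          have h2 : (R (d+1)).coeff mm = 0 := Polynomial.coeff_eq_zero_of_degree_lt
            (by rw [hdeg]; exact_mod_cast hlt)
          rw [hcq, h1, h2]; ring
      obtain ⟨c, hc⟩ := ih q hqdeg
      refine ⟨Function.update c (d+1) a, ?_⟩
      rw [Finset.sum_range_succ]
      have hupd : ∀ j ∈ Finset.range (d+1),
          Polynomial.C (Function.update c (d+1) a j) * R j = Polynomial.C (c j) * R j := by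
        intro j hj
        have : j ≠ d+1 := by have := Finset.mem_range.mp hj; omega
        rw [Function.update_of_ne this]
      rw [Finset.sum_congr rfl hupd, ← hc, Function.update_self, hq]
      ring

lemma ortho_machine (w : ℝ → ℝ) (hw_meas : ContinuousOn w (Set.Ioo (-1:ℝ) 1))
    (hw_nonneg : ∀ x ∈ Set.Ioo (-1:ℝ) 1, 0 ≤ w x)
    (R : ℕ → Polynomial ℝ) (hdeg : ∀ n, (R n).degree = n)
    (horth : ∀ j k, (∫ x in Set.Ioo (-1:ℝ) 1, w x * (R j).eval x * (R k).eval x)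
        = if j = k then (1:ℝ) else 0) :
    (∀ (p : Polynomial ℝ) (N : ℕ),
        MeasureTheory.IntegrableOn (fun x => w x * p.eval x * (R N).eval x)
          (Set.Ioo (-1:ℝ) 1)) ∧
    (∀ (p : Polynomial ℝ) (N : ℕ), p.degree < (N : ℕ) →
        (∫ x in Set.Ioo (-1:ℝ) 1, w x * p.eval x * (R N).eval x) = 0) := by
  have hmeas : ∀ p q : Polynomial ℝ, AEStronglyMeasurable
      (fun x => w x * p.eval x * q.eval x)
      (volume.restrict (Set.Ioo (-1:ℝ) 1)) :=
    fun p q => ((hw_meas.mul (p.continuous.continuousOn)).mul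
      (q.continuous.continuousOn)).aestronglyMeasurable measurableSet_Ioo
  have hdiag : ∀ j : ℕ, IntegrableOn
      (fun x => w x * (R j).eval x * (R j).eval x) (Set.Ioo (-1:ℝ) 1) := by
    intro j
    by_contra hc
    have h0 := horth j j
    rw [MeasureTheory.integral_undef hc] at h0
    simp at h0
  have hpair : ∀ j k : ℕ, IntegrableOn
      (fun x => w x * (R j).eval x * (R k).eval x) (Set.Ioo (-1:ℝ) 1) := by
    intro j k
    have hg : IntegrableOn (fun x =>
        2⁻¹ * (w x * (R j).eval x * (R j).eval x)
        + 2⁻¹ * (w x * (R k).eval x * (R k).eval x)) (Set.Ioo (-1:ℝ) 1) :=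
      ((hdiag j).const_mul _).add ((hdiag k).const_mul _)
    refine Integrable.mono hg (hmeas _ _) ?_
    filter_upwards [ae_restrict_mem measurableSet_Ioo] with x hx
    have hw := hw_nonneg x hx
    set a := (R j).eval x
    set b := (R k).eval x
    have key : |w x * a * b| ≤ 2⁻¹ * (w x * a * a) + 2⁻¹ * (w x * b * b) := by
      rw [abs_mul, abs_mul, abs_of_nonneg hw]
      nlinarith [mul_nonneg hw (sq_nonneg (|a| - |b|)), sq_abs a, sq_abs b,
        abs_nonneg a, abs_nonneg b]
    rw [Real.norm_eq_abs, Real.norm_eq_abs]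
    exact key.trans (le_abs_self _)
  have part1 : ∀ (p : Polynomial ℝ) (N : ℕ),
      IntegrableOn (fun x => w x * p.eval x * (R N).eval x) (Set.Ioo (-1:ℝ) 1) := by
    intro p N
    set d := p.natDegree with hdset
    obtain ⟨c, hc⟩ := expand_in_basis R hdeg d p p.degree_le_natDegree
    have hfun : (fun x => w x * p.eval x * (R N).eval x)
        = fun x => ∑ j ∈ Finset.range (d + 1),
            c j * (w x * (R j).eval x * (R N).eval x) := by
      funext x
      rw [hc, Polynomial.eval_finset_sum, Finset.mul_sum, Finset.sum_mul]
      refine Finset.sum_congr rfl fun j _ => ?_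
      simp only [Polynomial.eval_mul, Polynomial.eval_C]
      ring
    rw [hfun]
    exact integrable_finset_sum _ fun j _ => (hpair j N).const_mul (c j)
  refine ⟨part1, ?_⟩
  intro p N hpN
  by_cases hp0 : p = 0
  · simp [hp0]
  · have hd : p.natDegree < N := by
      have := Polynomial.degree_eq_natDegree hp0
      rw [this] at hpN
      exact_mod_cast hpN
    set d := p.natDegree with hdset
    obtain ⟨c, hc⟩ := expand_in_basis R hdeg d p p.degree_le_natDegree
    have hfun : (fun x => w x * p.eval x * (R N).eval x)
        = fun x => ∑ j ∈ Finset.range (d + 1),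
            c j * (w x * (R j).eval x * (R N).eval x) := by
      funext x
      rw [hc, Polynomial.eval_finset_sum, Finset.mul_sum, Finset.sum_mul]
      refine Finset.sum_congr rfl fun j _ => ?_
      simp only [Polynomial.eval_mul, Polynomial.eval_C]
      ring
    rw [hfun, integral_finset_sum _ fun j _ => (hpair j N).const_mul (c j)]
    refine Finset.sum_eq_zero fun j hj => ?_
    have hjN : j ≠ N := by
      have := Finset.mem_range.mp hj
      omega
    rw [MeasureTheory.integral_const_mul, horth j N, if_neg hjN, mul_zero]

lemma ibp_zero (α : ℝ) (hα : -1 < α) (p : Polynomial ℝ)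
    (hint : MeasureTheory.IntegrableOn
      (fun x => (1 - x^2) ^ α *
        (-(2*(α+1))*x * p.eval x + (1-x^2) * (Polynomial.derivative p).eval x))
      (Set.Ioo (-1:ℝ) 1)) :
    (∫ x in Set.Ioo (-1:ℝ) 1,
        (1 - x^2) ^ α *
          (-(2*(α+1))*x * p.eval x + (1-x^2) * (Polynomial.derivative p).eval x)) = 0 := by
  set g : ℝ → ℝ := fun x => (1 - x^2) ^ α *
      (-(2*(α+1))*x * p.eval x + (1-x^2) * (Polynomial.derivative p).eval x) with hg
  set G : ℝ → ℝ := fun x => (1 - x^2) ^ (α+1) * p.eval x with hG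
  have hderiv : ∀ x ∈ Set.Ioo (-1:ℝ) 1, HasDerivAt G (g x) x := by
    intro x hx
    have h1 : 0 < 1 - x^2 := by nlinarith [hx.1, hx.2]
    have hbase : HasDerivAt (fun y : ℝ => 1 - y^2) (-(2*x)) x := by
      simpa using ((hasDerivAt_pow 2 x).const_sub 1)
    have hr : HasDerivAt (fun y : ℝ => (1 - y^2) ^ (α+1))
        ((-(2*x)) * (α+1) * (1 - x^2) ^ (α+1-1)) x :=
      HasDerivAt.rpow_const hbase (Or.inl h1.ne')
    have hmul := hr.mul (p.hasDerivAt x)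
    have e1 : (α + 1 - 1 : ℝ) = α := by ring
    have e2 : (1 - x^2) ^ (α+1) = (1 - x^2) ^ α * (1 - x^2) := by
      rw [Real.rpow_add h1, Real.rpow_one]
    have heq : (-(2*x)) * (α+1) * (1 - x^2) ^ (α+1-1) * p.eval x
        + (1 - x^2) ^ (α+1) * (Polynomial.derivative p).eval x = g x := by
      rw [e1, e2, hg]
      ring
    rw [← heq]
    exact hmul
  have hcontG : ContinuousOn G (Set.Icc (-1:ℝ) 1) := by
    apply ContinuousOn.mul
    · exact ContinuousOn.rpow_const (by fun_prop) (fun x _ => Or.inr (by linarith))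
    · exact (p.continuous).continuousOn
  have hii : IntervalIntegrable g volume (-1:ℝ) 1 := by
    rw [intervalIntegrable_iff_integrableOn_Ioo_of_le (by norm_num)]
    exact hint
  have hftc : ∫ x in (-1:ℝ)..1, g x = G 1 - G (-1) :=
    intervalIntegral.integral_eq_sub_of_hasDeriv_right_of_le (by norm_num) hcontG
      (fun x hx => (hderiv x hx).hasDerivWithinAt) hii
  have hG1 : G 1 = 0 := by
    simp [hG, Real.zero_rpow (by linarith : α + 1 ≠ 0)]
  have hGm1 : G (-1) = 0 := by
    simp [hG]
    exact Or.inl (Real.zero_rpow (by linarith : α + 1 ≠ 0))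
  have : ∫ x in Set.Ioo (-1:ℝ) 1, g x = ∫ x in (-1:ℝ)..1, g x := by
    rw [intervalIntegral.integral_of_le (by norm_num : (-1:ℝ) ≤ 1),
      MeasureTheory.integral_Ioc_eq_integral_Ioo]
  rw [this, hftc, hG1, hGm1, sub_zero]

/-- The stretched vertical derivative `(D⁰ f)(t,φ,η) = h̃(t)⁻¹ ∂f/∂η` acts sparsely on the
cylinder gyroscopic bases:  `⟨D⁰ Φ_{m,l,k}^{(α,σ)}, Φ_{m,l',k'}^{(α+1,σ)}⟩_{dμ(α+1)} = 0`
unless `l' = l - 1` and `k - 1 ≤ k' ≤ k`. -/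
theorem statement18
    (h : Polynomial ℝ) (hpos : ∀ t ∈ Set.Icc (-1 : ℝ) 1, 0 < h.eval t)
    (α : ℝ) (hα : -1 < α) (σ : ℤ) (hσ : σ = -1 ∨ σ = 0 ∨ σ = 1)
    (m : ℤ) (hm : 0 ≤ |m| + σ)
    (P P1 : ℕ → Polynomial ℝ)
    (hPdeg : ∀ l, (P l).degree = l) (hPlead : ∀ l, 0 < (P l).leadingCoeff)
    (hPorth : ∀ l l', (∫ η in Set.Ioo (-1 : ℝ) 1,
        (1 - η ^ 2) ^ α * (P l).eval η * (P l').eval η)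
      = if l = l' then (1 : ℝ) else 0)
    (hP1deg : ∀ l, (P1 l).degree = l) (hP1lead : ∀ l, 0 < (P1 l).leadingCoeff)
    (hP1orth : ∀ l l', (∫ η in Set.Ioo (-1 : ℝ) 1,
        (1 - η ^ 2) ^ (α + 1) * (P1 l).eval η * (P1 l').eval η)
      = if l = l' then (1 : ℝ) else 0)
    (Q Q1 : ℕ → ℕ → Polynomial ℝ)
    (hQdeg : ∀ l k, (Q l k).degree = k) (hQlead : ∀ l k, 0 < (Q l k).leadingCoeff)
    (hQorth : ∀ l j k : ℕ, (∫ t in Set.Ioo (-1 : ℝ) 1,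
        (1 - t) ^ α * (1 + t) ^ ((|m| + σ : ℤ) : ℝ) * h.eval t ^ (2 * (l : ℝ) + 2 * α + 1)
          * (Q l j).eval t * (Q l k).eval t)
      = if j = k then (1 : ℝ) else 0)
    (hQ1deg : ∀ l k, (Q1 l k).degree = k) (hQ1lead : ∀ l k, 0 < (Q1 l k).leadingCoeff)
    (hQ1orth : ∀ l j k : ℕ, (∫ t in Set.Ioo (-1 : ℝ) 1,
        (1 - t) ^ (α + 1) * (1 + t) ^ ((|m| + σ : ℤ) : ℝ)
          * h.eval t ^ (2 * (l : ℝ) + 2 * α + 3)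
          * (Q1 l j).eval t * (Q1 l k).eval t)
      = if j = k then (1 : ℝ) else 0)
    (Φ Φ1 : ℕ → ℕ → ℝ → ℝ → ℝ → ℂ)
    (hΦ : ∀ l k t φ η, Φ l k t φ η =
      Complex.exp (Complex.I * m * φ) *
        (((1 + t) ^ (((|m| + σ : ℤ) : ℝ) / 2) * h.eval t ^ l
          * (P l).eval η * (Q l k).eval t : ℝ) : ℂ))
    (hΦ1 : ∀ l k t φ η, Φ1 l k t φ η =
      Complex.exp (Complex.I * m * φ) *
        (((1 + t) ^ (((|m| + σ : ℤ) : ℝ) / 2) * h.eval t ^ l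
          * (P1 l).eval η * (Q1 l k).eval t : ℝ) : ℂ)) :
    ∀ l l' k k' : ℕ,
      ¬(l' + 1 = l ∧ k ≤ k' + 1 ∧ k' ≤ k) →
      (2 * Real.pi : ℂ)⁻¹ *
        (∫ t in Set.Ioo (-1 : ℝ) 1, ∫ η in Set.Ioo (-1 : ℝ) 1,
          ∫ φ in Set.Ico (0 : ℝ) (2 * Real.pi),
            (((1 - η ^ 2) ^ (α + 1) * (1 - t) ^ (α + 1) * h.eval t ^ (2 * α + 3) : ℝ) : ℂ)
              * (starRingEnd ℂ)
                  (((h.eval t : ℝ) : ℂ)⁻¹ * deriv (fun y : ℝ => Φ l k t φ y) η)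
              * Φ1 l' k' t φ η)
      = 0 := by
  intro l l' k k' hcond
  set e : ℝ := ((|m| + σ : ℤ) : ℝ) with he
  set A : ℝ → ℝ := fun η =>
    (1 - η ^ 2) ^ (α + 1) * (Polynomial.derivative (P l)).eval η * (P1 l').eval η with hA
  set B : ℝ → ℝ := fun t =>
    (1 - t) ^ (α + 1) * (1 + t) ^ e * h.eval t ^ (2 * α + 2 : ℝ) * h.eval t ^ (l + l')
      * (Q l k).eval t * (Q1 l' k').eval t with hB
  -- Step 1: pointwise simplification of the integrand
  have hstep : ∀ t ∈ Set.Ioo (-1:ℝ) 1, ∀ (φ η : ℝ),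
      (((1 - η ^ 2) ^ (α + 1) * (1 - t) ^ (α + 1) * h.eval t ^ (2 * α + 3) : ℝ) : ℂ)
        * (starRingEnd ℂ)
            (((h.eval t : ℝ) : ℂ)⁻¹ * deriv (fun y : ℝ => Φ l k t φ y) η)
        * Φ1 l' k' t φ η = ((A η * B t : ℝ) : ℂ) := by
    intro t ht φ η
    have hh : 0 < h.eval t := hpos t ⟨le_of_lt ht.1, le_of_lt ht.2⟩
    have ht2 : (0:ℝ) < 1 + t := by linarith [ht.1]
    have hfun : (fun y : ℝ => Φ l k t φ y) = fun y =>
        Complex.exp (Complex.I * m * φ) *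
          (((1 + t) ^ (e / 2) * h.eval t ^ l * (P l).eval y * (Q l k).eval t : ℝ) : ℂ) :=
      funext fun y => hΦ l k t φ y
    have hdA : HasDerivAt
        (fun y : ℝ => (1 + t) ^ (e / 2) * h.eval t ^ l * (P l).eval y * (Q l k).eval t)
        ((1 + t) ^ (e / 2) * h.eval t ^ l * (Polynomial.derivative (P l)).eval η
          * (Q l k).eval t) η :=
      (((P l).hasDerivAt η).const_mul ((1 + t) ^ (e / 2) * h.eval t ^ l)).mul_const _
    have hdC : HasDerivAt (fun y : ℝ => Φ l k t φ y)
        (Complex.exp (Complex.I * m * φ) *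
          (((1 + t) ^ (e / 2) * h.eval t ^ l * (Polynomial.derivative (P l)).eval η
            * (Q l k).eval t : ℝ) : ℂ)) η := by
      rw [hfun]
      exact (hdA.ofReal_comp).const_mul _
    rw [hdC.deriv, hΦ1]
    have hE : (starRingEnd ℂ) (Complex.exp (Complex.I * m * φ))
        * Complex.exp (Complex.I * m * φ) = 1 := by
      rw [← Complex.exp_conj, ← Complex.exp_add]
      have : (starRingEnd ℂ) (Complex.I * m * φ) + Complex.I * m * φ = 0 := by
        simp [map_mul, Complex.conj_I, Complex.conj_ofReal]
        try ring
      rw [this, Complex.exp_zero]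
    simp only [map_mul, map_inv₀, Complex.conj_ofReal]
    set E := Complex.exp (Complex.I * m * φ)
    set D : ℝ := (1 + t) ^ (e / 2) * h.eval t ^ l * (Polynomial.derivative (P l)).eval η
      * (Q l k).eval t with hD
    set r2 : ℝ := (1 + t) ^ (e / 2) * h.eval t ^ l' * (P1 l').eval η * (Q1 l' k').eval t
      with hr2
    set W : ℝ := (1 - η ^ 2) ^ (α + 1) * (1 - t) ^ (α + 1) * h.eval t ^ (2 * α + 3) with hW
    have hre : ((W:ℂ)) * (((h.eval t : ℝ):ℂ)⁻¹ * ((starRingEnd ℂ) E * (D:ℂ)))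
        * (E * (r2:ℂ)) = ((starRingEnd ℂ) E * E) * ((W * (h.eval t)⁻¹ * D * r2 : ℝ) : ℂ) := by
      push_cast
      ring
    rw [hre, hE, one_mul]
    congr 1
    have k1 : h.eval t ^ (2*α+3:ℝ) * (h.eval t)⁻¹ = h.eval t ^ (2*α+2:ℝ) := by
      rw [← Real.rpow_neg_one (h.eval t), ← Real.rpow_add hh]
      congr 1
      ring
    have k2 : (1+t)^(e/2) * (1+t)^(e/2) = (1+t)^e := by
      rw [← Real.rpow_add ht2]
      ring_nf
    calc W * (h.eval t)⁻¹ * D * r2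
        = (h.eval t ^ (2*α+3:ℝ) * (h.eval t)⁻¹) * ((1+t)^(e/2) * (1+t)^(e/2))
          * ((1 - η ^ 2) ^ (α + 1) * (1 - t) ^ (α + 1) * (h.eval t ^ l * h.eval t ^ l')
            * (Polynomial.derivative (P l)).eval η * (P1 l').eval η
            * (Q l k).eval t * (Q1 l' k').eval t) := by
          rw [hW, hD, hr2]; ring
      _ = A η * B t := by
          rw [k1, k2]
          simp only [hA, hB, pow_add]
          ring
  -- Step 2: collapse the triple integral
  have houter : (∫ t in Set.Ioo (-1 : ℝ) 1, ∫ η in Set.Ioo (-1 : ℝ) 1,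
          ∫ φ in Set.Ico (0 : ℝ) (2 * Real.pi),
            (((1 - η ^ 2) ^ (α + 1) * (1 - t) ^ (α + 1) * h.eval t ^ (2 * α + 3) : ℝ) : ℂ)
              * (starRingEnd ℂ)
                  (((h.eval t : ℝ) : ℂ)⁻¹ * deriv (fun y : ℝ => Φ l k t φ y) η)
              * Φ1 l' k' t φ η)
      = (2 * Real.pi : ℝ) •
          (((∫ η in Set.Ioo (-1:ℝ) 1, A η) * (∫ t in Set.Ioo (-1:ℝ) 1, B t) : ℝ) : ℂ) := by
    rw [setIntegral_congr_fun measurableSet_Ioo (g := fun t =>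
        (2 * Real.pi : ℝ) • (((∫ η in Set.Ioo (-1:ℝ) 1, A η) * B t : ℝ) : ℂ)) ?_]
    · have hoR : (∫ t in Set.Ioo (-1:ℝ) 1,
          (((∫ η in Set.Ioo (-1:ℝ) 1, A η) * B t : ℝ) : ℂ))
          = (((∫ t in Set.Ioo (-1:ℝ) 1, (∫ η in Set.Ioo (-1:ℝ) 1, A η) * B t : ℝ)) : ℂ) :=
        integral_ofReal
      rw [integral_smul, hoR, MeasureTheory.integral_const_mul]
    · intro t ht
      have hφint : ∀ η : ℝ, (∫ φ in Set.Ico (0 : ℝ) (2 * Real.pi),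
          (((1 - η ^ 2) ^ (α + 1) * (1 - t) ^ (α + 1) * h.eval t ^ (2 * α + 3) : ℝ) : ℂ)
            * (starRingEnd ℂ)
                (((h.eval t : ℝ) : ℂ)⁻¹ * deriv (fun y : ℝ => Φ l k t φ y) η)
            * Φ1 l' k' t φ η)
          = (2 * Real.pi : ℝ) • ((A η * B t : ℝ) : ℂ) := by
        intro η
        rw [setIntegral_congr_fun measurableSet_Ico
          (g := fun _ => ((A η * B t : ℝ) : ℂ)) (fun φ _ => hstep t ht φ η)]
        rw [setIntegral_const, measureReal_def, Real.volume_Ico, sub_zero,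
          ENNReal.toReal_ofReal (by positivity)]
      show (∫ η in Set.Ioo (-1:ℝ) 1, ∫ φ in Set.Ico (0 : ℝ) (2 * Real.pi), _) = _
      rw [setIntegral_congr_fun measurableSet_Ioo (fun η _ => hφint η)]
      have hoR2 : (∫ η in Set.Ioo (-1:ℝ) 1, ((A η * B t : ℝ) : ℂ))
          = (((∫ η in Set.Ioo (-1:ℝ) 1, A η * B t : ℝ)) : ℂ) := integral_ofReal
      rw [integral_smul, hoR2, MeasureTheory.integral_mul_const]
  -- Step 3: case analysis
  have hkey : (∫ η in Set.Ioo (-1:ℝ) 1, A η) * (∫ t in Set.Ioo (-1:ℝ) 1, B t) = 0 := by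
    by_cases hll : l' + 1 = l
    · refine mul_eq_zero_of_right _ ?_
      have hlcast : (l : ℝ) = (l' : ℝ) + 1 := by exact_mod_cast hll.symm
      have hk : k < k' ∨ k' + 1 < k := by
        by_contra hc
        push_neg at hc
        exact hcond ⟨hll, by omega, by omega⟩
      rcases hk with hk | hk
      · set w1 : ℝ → ℝ := fun t =>
          (1 - t) ^ (α+1) * (1+t) ^ e * h.eval t ^ (2*(l':ℝ)+2*α+3) with hw1
        have hw1m : ContinuousOn w1 (Set.Ioo (-1:ℝ) 1) := by
          refine ContinuousOn.mul (ContinuousOn.mul ?_ ?_) ?_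
          · exact ContinuousOn.rpow_const (by fun_prop)
              (fun x hx => Or.inl (by simp only [Set.mem_Ioo] at hx; intro hc; linarith [hx.2]))
          · exact ContinuousOn.rpow_const (by fun_prop)
              (fun x hx => Or.inl (by simp only [Set.mem_Ioo] at hx; intro hc; linarith [hx.1]))
          · exact ContinuousOn.rpow_const (h.continuous.continuousOn)
              (fun x hx => Or.inl (hpos x ⟨hx.1.le, hx.2.le⟩).ne')
        have hw1n : ∀ x ∈ Set.Ioo (-1:ℝ) 1, 0 ≤ w1 x := by
          intro x hx
          have hh : 0 < h.eval x := hpos x ⟨hx.1.le, hx.2.le⟩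
          exact mul_nonneg (mul_nonneg (Real.rpow_nonneg (by linarith [hx.2]) _)
            (Real.rpow_nonneg (by linarith [hx.1]) _)) (Real.rpow_nonneg hh.le _)
        have M := ortho_machine w1 hw1m hw1n (Q1 l') (hQ1deg l') (hQ1orth l')
        have hBeq : ∀ t ∈ Set.Ioo (-1:ℝ) 1,
            B t = w1 t * (Q l k).eval t * (Q1 l' k').eval t := by
          intro t ht
          have hh : 0 < h.eval t := hpos t ⟨ht.1.le, ht.2.le⟩
          have hcomb : h.eval t ^ (2*α+2:ℝ) * h.eval t ^ (l + l')
              = h.eval t ^ (2*(l':ℝ)+2*α+3) := by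
            rw [← Real.rpow_natCast (h.eval t) (l + l'), ← Real.rpow_add hh]
            congr 1
            push_cast
            rw [hlcast]
            ring
          simp only [hB, hw1]
          rw [← hcomb]
          ring
        rw [setIntegral_congr_fun measurableSet_Ioo hBeq]
        refine M.2 (Q l k) k' ?_
        rw [hQdeg l k]
        exact_mod_cast hk
      · set w2 : ℝ → ℝ := fun t =>
          (1 - t) ^ α * (1+t) ^ e * h.eval t ^ (2*(l:ℝ)+2*α+1) with hw2
        have hw2m : ContinuousOn w2 (Set.Ioo (-1:ℝ) 1) := by
          refine ContinuousOn.mul (ContinuousOn.mul ?_ ?_) ?_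
          · exact ContinuousOn.rpow_const (by fun_prop)
              (fun x hx => Or.inl (by simp only [Set.mem_Ioo] at hx; intro hc; linarith [hx.2]))
          · exact ContinuousOn.rpow_const (by fun_prop)
              (fun x hx => Or.inl (by simp only [Set.mem_Ioo] at hx; intro hc; linarith [hx.1]))
          · exact ContinuousOn.rpow_const (h.continuous.continuousOn)
              (fun x hx => Or.inl (hpos x ⟨hx.1.le, hx.2.le⟩).ne')
        have hw2n : ∀ x ∈ Set.Ioo (-1:ℝ) 1, 0 ≤ w2 x := by
          intro x hx
          have hh : 0 < h.eval x := hpos x ⟨hx.1.le, hx.2.le⟩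
          exact mul_nonneg (mul_nonneg (Real.rpow_nonneg (by linarith [hx.2]) _)
            (Real.rpow_nonneg (by linarith [hx.1]) _)) (Real.rpow_nonneg hh.le _)
        have M := ortho_machine w2 hw2m hw2n (Q l) (hQdeg l) (hQorth l)
        have hBeq : ∀ t ∈ Set.Ioo (-1:ℝ) 1,
            B t = w2 t * (((1:Polynomial ℝ) - Polynomial.X) * Q1 l' k').eval t
              * (Q l k).eval t := by
          intro t ht
          have hh : 0 < h.eval t := hpos t ⟨ht.1.le, ht.2.le⟩
          have h1t : (0:ℝ) < 1 - t := by linarith [ht.2]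
          have hsplit1t : (1 - t:ℝ) ^ (α+1) = (1-t)^α * (1-t) := by
            rw [Real.rpow_add h1t, Real.rpow_one]
          have hcomb : h.eval t ^ (2*α+2:ℝ) * h.eval t ^ (l + l')
              = h.eval t ^ (2*(l:ℝ)+2*α+1) := by
            rw [← Real.rpow_natCast (h.eval t) (l + l'), ← Real.rpow_add hh]
            congr 1
            push_cast
            rw [hlcast]
            ring
          simp only [hB, hw2, Polynomial.eval_mul, Polynomial.eval_sub,
            Polynomial.eval_one, Polynomial.eval_X]
          rw [← hcomb, hsplit1t]
          ring
        rw [setIntegral_congr_fun measurableSet_Ioo hBeq]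
        refine M.2 _ k ?_
        have hdX : ((1 : Polynomial ℝ) - Polynomial.X).degree = 1 := by
          rw [show (1 : Polynomial ℝ) - Polynomial.X
            = -(Polynomial.X - Polynomial.C 1) by rw [Polynomial.C_1]; ring]
          rw [Polynomial.degree_neg, Polynomial.degree_X_sub_C]
        rw [Polynomial.degree_mul, hdX, hQ1deg l' k']
        have hkk : (1 + k' : ℕ) < k := by omega
        exact_mod_cast hkk
    · refine mul_eq_zero_of_left ?_ _
      have hPl0 : P l ≠ 0 := by
        intro hc
        have h0 := hPdeg l
        rw [hc, Polynomial.degree_zero] at h0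
        exact absurd h0.symm (by exact_mod_cast WithBot.coe_ne_bot)
      by_cases hll2 : l ≤ l'
      · set w3 : ℝ → ℝ := fun η => (1 - η ^ 2) ^ (α+1) with hw3
        have hw3m : ContinuousOn w3 (Set.Ioo (-1:ℝ) 1) := by
          exact ContinuousOn.rpow_const (by fun_prop)
            (fun x hx => Or.inl
              (by simp only [Set.mem_Ioo] at hx; intro hc; nlinarith [hx.1, hx.2]))
        have hw3n : ∀ x ∈ Set.Ioo (-1:ℝ) 1, 0 ≤ w3 x := by
          intro x hx
          exact Real.rpow_nonneg (by nlinarith [hx.1, hx.2]) _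
        have M := ortho_machine w3 hw3m hw3n P1 hP1deg hP1orth
        have hdeg : (Polynomial.derivative (P l)).degree < (l' : ℕ) :=
          calc (Polynomial.derivative (P l)).degree
              < (P l).degree := Polynomial.degree_derivative_lt hPl0
            _ = (l : ℕ) := hPdeg l
            _ ≤ (l' : ℕ) := by exact_mod_cast hll2
        exact M.2 (Polynomial.derivative (P l)) l' hdeg
      · have hl2 : l' + 2 ≤ l := by omega
        set q := P1 l' with hqdef
        have hqne : q ≠ 0 := by
          intro hc
          have h0 := hP1deg l'
          rw [hqdef] at hc
          rw [hc, Polynomial.degree_zero] at h0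
          exact absurd h0.symm (by exact_mod_cast WithBot.coe_ne_bot)
        set pb := P l * q with hpb
        set w4 : ℝ → ℝ := fun η => (1 - η ^ 2) ^ α with hw4
        have hw4m : ContinuousOn w4 (Set.Ioo (-1:ℝ) 1) := by
          exact ContinuousOn.rpow_const (by fun_prop)
            (fun x hx => Or.inl
              (by simp only [Set.mem_Ioo] at hx; intro hc; nlinarith [hx.1, hx.2]))
        have hw4n : ∀ x ∈ Set.Ioo (-1:ℝ) 1, 0 ≤ w4 x := by
          intro x hx
          exact Real.rpow_nonneg (by nlinarith [hx.1, hx.2]) _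
        have M := ortho_machine w4 hw4m hw4n P hPdeg hPorth
        set bigp := Polynomial.C (-(2*(α+1))) * Polynomial.X * pb
            + ((1:Polynomial ℝ) - Polynomial.X ^ 2) * Polynomial.derivative pb with hbigp
        set c0 := (P 0).coeff 0 with hc0def
        have hP0C : P 0 = Polynomial.C c0 :=
          Polynomial.eq_C_of_degree_le_zero (by simp [hPdeg 0])
        have hc0 : c0 ≠ 0 := by
          intro hc
          have : P 0 = 0 := by rw [hP0C, hc, map_zero]
          have h0 := hPdeg 0
          rw [this, Polynomial.degree_zero] at h0
          simp at h0
        have hgint : IntegrableOn (fun x => (1 - x^2) ^ α *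
            (-(2*(α+1))*x * pb.eval x + (1-x^2) * (Polynomial.derivative pb).eval x))
            (Set.Ioo (-1:ℝ) 1) := by
          have hI := (M.1 bigp 0).const_mul c0⁻¹
          have hfe : (fun x => c0⁻¹ * (w4 x * bigp.eval x * (P 0).eval x))
              = fun x => (1 - x^2) ^ α *
                (-(2*(α+1))*x * pb.eval x + (1-x^2) * (Polynomial.derivative pb).eval x) := by
            funext x
            rw [hP0C, Polynomial.eval_C]
            simp only [hbigp, hw4, Polynomial.eval_add, Polynomial.eval_mul,
              Polynomial.eval_sub, Polynomial.eval_pow, Polynomial.eval_X,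
              Polynomial.eval_C, Polynomial.eval_one]
            field_simp
            try ring
          rw [← hfe]
          exact hI
        have hibp := ibp_zero α hα pb hgint
        set s := Polynomial.C (-(2*(α+1))) * Polynomial.X * q
            + ((1:Polynomial ℝ) - Polynomial.X ^ 2) * Polynomial.derivative q with hs
        have hsdeg : s.degree < (l : ℕ) := by
          have d1 : (Polynomial.C (-(2*(α+1))) * Polynomial.X * q).degree
              ≤ ((l' + 1 : ℕ) : WithBot ℕ) := by
            refine (Polynomial.degree_mul_le _ _).trans ?_
            have h1 : (Polynomial.C (-(2*(α+1))) * Polynomial.X).degree ≤ 1 :=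
              calc (Polynomial.C (-(2*(α+1))) * Polynomial.X).degree
                  ≤ (Polynomial.C (-(2*(α+1)))).degree + Polynomial.X.degree :=
                    Polynomial.degree_mul_le _ _
                _ ≤ 0 + 1 := add_le_add Polynomial.degree_C_le
                    (le_of_eq Polynomial.degree_X)
                _ = 1 := zero_add 1
            have h2 : q.degree = (l' : ℕ) := hP1deg l'
            calc (Polynomial.C (-(2*(α+1))) * Polynomial.X).degree + q.degree
                ≤ 1 + ((l' : ℕ) : WithBot ℕ) := add_le_add h1 (le_of_eq h2)
              _ = ((l' + 1 : ℕ) : WithBot ℕ) := by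
                  rw [Nat.cast_add, Nat.cast_one, add_comm]
          have d2 : ((((1:Polynomial ℝ) - Polynomial.X ^ 2))
              * Polynomial.derivative q).degree ≤ ((l' + 1 : ℕ) : WithBot ℕ) := by
            by_cases hq' : Polynomial.derivative q = 0
            · rw [hq', mul_zero, Polynomial.degree_zero]
              exact bot_le
            · refine (Polynomial.degree_mul_le _ _).trans ?_
              have hX2 : ((1:Polynomial ℝ) - Polynomial.X ^ 2).degree = 2 := by
                rw [show (1:Polynomial ℝ) - Polynomial.X ^ 2
                  = -(Polynomial.X ^ 2 - Polynomial.C 1) by rw [Polynomial.C_1]; ring]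
                rw [Polynomial.degree_neg]
                exact Polynomial.degree_X_pow_sub_C (by norm_num) 1
              have hq'd : (Polynomial.derivative q).degree < ((l' : ℕ) : WithBot ℕ) := by
                rw [← hP1deg l']
                exact Polynomial.degree_derivative_lt hqne
              rw [hX2, Polynomial.degree_eq_natDegree hq']
              have hn : (Polynomial.derivative q).natDegree < l' := by
                have h3 := hq'd
                rw [Polynomial.degree_eq_natDegree hq'] at h3
                exact_mod_cast h3
              exact_mod_cast (by omega : 2 + (Polynomial.derivative q).natDegree ≤ l' + 1)
          have hsle : s.degree ≤ ((l' + 1 : ℕ) : WithBot ℕ) :=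
            (Polynomial.degree_add_le _ _).trans (max_le d1 d2)
          exact lt_of_le_of_lt hsle (by exact_mod_cast (by omega : l' + 1 < l))
        have hAeq : ∀ x ∈ Set.Ioo (-1:ℝ) 1, A x =
            (1 - x^2) ^ α *
              (-(2*(α+1))*x * pb.eval x + (1-x^2) * (Polynomial.derivative pb).eval x)
            - w4 x * s.eval x * (P l).eval x := by
          intro x hx
          have h1 : (0:ℝ) < 1 - x^2 := by nlinarith [hx.1, hx.2]
          have hr : (1 - x^2:ℝ) ^ (α+1) = (1-x^2)^α * (1-x^2) := by
            rw [Real.rpow_add h1, Real.rpow_one]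
          simp only [hA, hw4, hpb, hs, Polynomial.derivative_mul, Polynomial.eval_add,
            Polynomial.eval_mul, Polynomial.eval_sub, Polynomial.eval_pow,
            Polynomial.eval_X, Polynomial.eval_C, Polynomial.eval_one]
          rw [hr]
          ring
        rw [setIntegral_congr_fun measurableSet_Ioo hAeq,
          MeasureTheory.integral_sub hgint (M.1 s l), hibp, M.2 s l hsdeg, sub_zero]
  rw [houter, hkey]
  simp
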